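/- Trace minimization over the Stiefel manifold (Lemma min_trace): Let S ∈ ℝ^{p×p} be symmetric and R = diag(r₁,…,r_k) ∈ ℝ^{k×k} with r₁ ≥ ⋯ ≥ r_k ≥ 0 and k ≤ p. Then the map H ↦ tr(S H R Hᵀ) over the set of semi-orthogonal matrices H ∈ ℝ^{p×k} (HᵀH = I_k) attains its minimum at Ĥ = [v_p, …, v_{p−k+1}], where v_j is a unit eigenvector of S corresponding to its j-th largest eigenvalue λ_j(S); in particular, for every semi-orthogonal H ∈ ℝ^{p×k}, tr(S H R Hᵀ) ≥ Σ_{j=1}^k r_j λ_{p−j+1}(S). -/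
import Mathlib


open Matrix
open scoped BigOperators

noncomputable section

/-- Abel summation inequality. -/
lemma abel_ineq (k : ℕ) (r a b : ℕ → ℝ)
    (hr : ∀ i j, i ≤ j → j < k → r j ≤ r i) (hrNN : ∀ j, j < k → 0 ≤ r j)
    (hpref : ∀ m, m ≤ k → ∑ j ∈ Finset.range m, b j ≤ ∑ j ∈ Finset.range m, a j) :
    ∑ j ∈ Finset.range k, r j * b j ≤ ∑ j ∈ Finset.range k, r j * a j := by
  induction k generalizing r with
  | zero => simp
  | succ k ih =>
    have h1 : ∑ j ∈ Finset.range k, (r j - r k) * b j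
        ≤ ∑ j ∈ Finset.range k, (r j - r k) * a j := by
      apply ih
      · intro i j hij hjk; have := hr i j hij (by omega); linarith
      · intro j hj
        have := hr j k (by omega) (by omega); linarith
      · intro m hm; exact hpref m (by omega)
    have h2 : r k * ∑ j ∈ Finset.range (k+1), b j
        ≤ r k * ∑ j ∈ Finset.range (k+1), a j := by
      apply mul_le_mul_of_nonneg_left (hpref (k+1) le_rfl) (hrNN k (by omega))
    have e : ∀ c : ℕ → ℝ, ∑ j ∈ Finset.range (k+1), r j * c j
        = ∑ j ∈ Finset.range k, (r j - r k) * c j + r k * ∑ j ∈ Finset.range (k+1), c j := by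
      intro c
      have h3 : ∑ j ∈ Finset.range k, (r j - r k) * c j
          = ∑ j ∈ Finset.range k, r j * c j - r k * ∑ j ∈ Finset.range k, c j := by
        rw [Finset.mul_sum, ← Finset.sum_sub_distrib]
        apply Finset.sum_congr rfl; intro j _; ring
      rw [Finset.sum_range_succ, Finset.sum_range_succ c, h3]; ring
    rw [e a, e b]; linarith

lemma kyfan (p m : ℕ) (hmp : m ≤ p)
    (S : Matrix (Fin p) (Fin p) ℝ) (hS : S.IsSymm)
    (lam : Fin p → ℝ) (v : Fin p → Fin p → ℝ)
    (hEig : ∀ j, S *ᵥ v j = lam j • v j)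
    (hOrth : ∀ j l, v j ⬝ᵥ v l = if j = l then (1:ℝ) else 0)
    (hAnti : ∀ j l : Fin p, j ≤ l → lam l ≤ lam j)
    (h : Fin m → Fin p → ℝ)
    (hho : ∀ j l, h j ⬝ᵥ h l = if j = l then (1:ℝ) else 0) :
    ∑ j : Fin m, lam ⟨p - 1 - j.val, by have := j.isLt; omega⟩
      ≤ ∑ j : Fin m, h j ⬝ᵥ (S *ᵥ h j) := by
  classical
  -- completeness of the eigenbasis
  set V : Matrix (Fin p) (Fin p) ℝ := Matrix.of v with hV
  have hVVt : V * Vᵀ = 1 := by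
    ext j l
    have := hOrth j l
    simpa [Matrix.mul_apply, Matrix.one_apply, dotProduct, hV] using this
  have hVtV : Vᵀ * V = 1 := mul_eq_one_comm.mp hVVt
  have key : ∀ a b : Fin p, (∑ i, v i a * v i b) = if a = b then (1:ℝ) else 0 := by
    intro a b
    have := congrFun (congrFun hVtV a) b
    simpa [Matrix.mul_apply, Matrix.one_apply, hV] using this
  have parseval : ∀ x w : Fin p → ℝ, x ⬝ᵥ w = ∑ i, (v i ⬝ᵥ x) * (v i ⬝ᵥ w) := by
    intro x w
    calc x ⬝ᵥ w = ∑ a, x a * w a := rfl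
      _ = ∑ a, ∑ b, (x a * w b) * ∑ i, v i a * v i b := by
          simp [key, mul_ite]
      _ = ∑ a, ∑ b, ∑ i, (x a * w b) * (v i a * v i b) := by
          apply Finset.sum_congr rfl; intro a _
          apply Finset.sum_congr rfl; intro b _
          rw [Finset.mul_sum]
      _ = ∑ a, ∑ i, ∑ b, (x a * w b) * (v i a * v i b) := by
          apply Finset.sum_congr rfl; intro a _
          rw [Finset.sum_comm]
      _ = ∑ i, ∑ a, ∑ b, (x a * w b) * (v i a * v i b) := by
          rw [Finset.sum_comm]
      _ = ∑ i, (v i ⬝ᵥ x) * (v i ⬝ᵥ w) := by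
          apply Finset.sum_congr rfl; intro i _
          rw [dotProduct, dotProduct, Finset.sum_mul_sum]
          apply Finset.sum_congr rfl; intro a _
          apply Finset.sum_congr rfl; intro b _; ring
  set c : Fin m → Fin p → ℝ := fun j i => v i ⬝ᵥ h j with hcdef
  set t : Fin p → ℝ := fun i => ∑ j, c j i * c j i with htdef
  have dps : ∀ (x : Fin p → ℝ) (f : Fin m → Fin p → ℝ),
      x ⬝ᵥ (∑ j, f j) = ∑ j, x ⬝ᵥ f j := by
    intro x f
    simp only [dotProduct, Finset.sum_apply, Finset.mul_sum]
    rw [Finset.sum_comm]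
  have sdp : ∀ (x : Fin p → ℝ) (f : Fin m → Fin p → ℝ),
      (∑ j, f j) ⬝ᵥ x = ∑ j, f j ⬝ᵥ x := by
    intro x f
    rw [dotProduct_comm, dps]
    apply Finset.sum_congr rfl; intro j _
    rw [dotProduct_comm]
  have hnorm : ∀ j, (∑ i, c j i * c j i) = 1 := by
    intro j
    have h2 := parseval (h j) (h j)
    rw [hho j j] at h2
    norm_num at h2
    simp only [hcdef]
    exact h2.symm
  have hvS : ∀ i : Fin p, ∀ w : Fin p → ℝ, v i ⬝ᵥ (S *ᵥ w) = lam i * (v i ⬝ᵥ w) := by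
    intro i w
    rw [Matrix.dotProduct_mulVec]
    have h1 : v i ᵥ* S = lam i • v i := by
      calc v i ᵥ* S = v i ᵥ* Sᵀ := by rw [hS]
        _ = S *ᵥ v i := Matrix.vecMul_transpose S (v i)
        _ = lam i • v i := hEig i
    rw [h1, smul_dotProduct]
    simp
  have hq : ∀ j, h j ⬝ᵥ (S *ᵥ h j) = ∑ i, lam i * (c j i * c j i) := by
    intro j
    rw [parseval]
    apply Finset.sum_congr rfl; intro i _
    rw [hvS i (h j)]
    ring
  have htNN : ∀ i, 0 ≤ t i := by
    intro i
    exact Finset.sum_nonneg fun j _ => mul_self_nonneg _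
  have htle1 : ∀ i, t i ≤ 1 := by
    intro i
    set w : Fin p → ℝ := ∑ j, c j i • h j with hwdef
    have hvw : v i ⬝ᵥ w = t i := by
      rw [hwdef, dps]
      simp only [dotProduct_smul, smul_eq_mul, htdef, hcdef]
    have hwv : w ⬝ᵥ v i = t i := by rw [dotProduct_comm]; exact hvw
    have hww : w ⬝ᵥ w = t i := by
      rw [hwdef, sdp]
      have hterm : ∀ j : Fin m, (c j i • h j) ⬝ᵥ (∑ l, c l i • h l) = c j i * c j i := by
        intro j
        rw [smul_dotProduct, dps]
        simp only [dotProduct_smul, smul_eq_mul, hho, mul_ite, mul_one, mul_zero]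
        rw [Finset.sum_ite_eq]
        simp
      rw [Finset.sum_congr rfl fun j _ => hterm j]
    have hnn : 0 ≤ (v i - w) ⬝ᵥ (v i - w) := by
      rw [dotProduct]
      exact Finset.sum_nonneg fun a _ => mul_self_nonneg _
    rw [sub_dotProduct, dotProduct_sub, dotProduct_sub,
      hvw, hwv, hww, hOrth i i] at hnn
    norm_num at hnn
    linarith
  have hsum_t : ∑ i, t i = (m : ℝ) := by
    rw [htdef]
    rw [Finset.sum_comm]
    simp only [hnorm]
    simp
  have hmain : ∑ i, lam i * t i = ∑ j : Fin m, h j ⬝ᵥ (S *ᵥ h j) := by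
    rw [Finset.sum_congr rfl fun j (_ : j ∈ Finset.univ) => hq j]
    rw [Finset.sum_comm]
    apply Finset.sum_congr rfl; intro i _
    rw [htdef]
    simp [Finset.mul_sum]
  rw [← hmain]
  rcases Nat.eq_zero_or_pos m with hm0 | hm1
  · subst hm0
    have : ∀ i, t i = 0 := by intro i; simp [htdef]
    simp [this]
  · -- the rearrangement argument
    have hp1 : 1 ≤ p := le_trans hm1 hmp
    set n := p - m with hn
    set i0 : Fin p := ⟨n, by omega⟩ with hi0
    set e : Fin m → Fin p := fun j => ⟨p - 1 - j.val, by have := j.isLt; omega⟩ with he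
    set T : Finset (Fin p) := Finset.univ.filter (fun i => n ≤ i.val) with hT
    have himg : Finset.univ.image e = T := by
      ext i
      simp only [Finset.mem_image, Finset.mem_univ, true_and, hT, Finset.mem_filter]
      constructor
      · rintro ⟨j, rfl⟩
        have := j.isLt
        simp only [he, hn]
        omega
      · intro hi
        refine ⟨⟨p - 1 - i.val, by omega⟩, ?_⟩
        have := i.isLt
        apply Fin.ext
        simp only [he]
        omega
    have einj : Function.Injective e := by
      intro j1 j2 hj
      have h1 := j1.isLt
      have h2 := j2.isLt
      apply Fin.ext
      have := congrArg Fin.val hj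
      simp only [he] at this
      omega
    have hcardT : T.card = m := by
      rw [← himg, Finset.card_image_of_injective _ einj]
      simp
    have hsumLHS : ∑ j : Fin m, lam ⟨p - 1 - j.val, by have := j.isLt; omega⟩
        = ∑ i ∈ T, lam i := by
      have h1 : ∑ i ∈ Finset.image e Finset.univ, lam i = ∑ j : Fin m, lam (e j) :=
        Finset.sum_image (fun a _ b _ hab => einj hab)
      rw [himg] at h1
      rw [← h1]
    rw [hsumLHS]
    have hsplit : ∑ i ∈ T, t i + ∑ i ∈ Finset.univ.filter (fun i : Fin p => ¬ n ≤ i.val), t i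
        = (m : ℝ) := by
      rw [← hsum_t]
      exact Finset.sum_filter_add_sum_filter_not _ _ _
    have step1 : ∑ i ∈ T, lam i
        = ∑ i ∈ T, lam i * t i + ∑ i ∈ T, lam i * (1 - t i) := by
      rw [← Finset.sum_add_distrib]
      apply Finset.sum_congr rfl; intro i _; ring
    have step2 : ∑ i ∈ T, lam i * (1 - t i) ≤ ∑ i ∈ T, lam i0 * (1 - t i) := by
      apply Finset.sum_le_sum
      intro i hi
      have hin : n ≤ i.val := by
        rw [hT] at hi; exact (Finset.mem_filter.mp hi).2
      have : lam i ≤ lam i0 := hAnti i0 i hin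
      have h1t : 0 ≤ 1 - t i := by linarith [htle1 i]
      exact mul_le_mul_of_nonneg_right this h1t
    have step3 : ∑ i ∈ T, lam i0 * (1 - t i)
        = lam i0 * ∑ i ∈ Finset.univ.filter (fun i : Fin p => ¬ n ≤ i.val), t i := by
      rw [← Finset.mul_sum]
      congr 1
      have : ∑ i ∈ T, (1 - t i) = (T.card : ℝ) - ∑ i ∈ T, t i := by
        rw [Finset.sum_sub_distrib]
        simp
      rw [this, hcardT]
      linarith [hsplit]
    have step4 : lam i0 * ∑ i ∈ Finset.univ.filter (fun i : Fin p => ¬ n ≤ i.val), t i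
        ≤ ∑ i ∈ Finset.univ.filter (fun i : Fin p => ¬ n ≤ i.val), lam i * t i := by
      rw [Finset.mul_sum]
      apply Finset.sum_le_sum
      intro i hi
      have hin : i.val < n := by
        have := (Finset.mem_filter.mp hi).2; omega
      have : lam i0 ≤ lam i := hAnti i i0 (le_of_lt hin)
      exact mul_le_mul_of_nonneg_right this (htNN i)
    have final : ∑ i ∈ T, lam i * t i
        + ∑ i ∈ Finset.univ.filter (fun i : Fin p => ¬ n ≤ i.val), lam i * t i
        = ∑ i, lam i * t i :=
      Finset.sum_filter_add_sum_filter_not _ _ _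
    calc ∑ i ∈ T, lam i
        = ∑ i ∈ T, lam i * t i + ∑ i ∈ T, lam i * (1 - t i) := step1
      _ ≤ ∑ i ∈ T, lam i * t i + ∑ i ∈ T, lam i0 * (1 - t i) := by linarith
      _ = ∑ i ∈ T, lam i * t i
          + lam i0 * ∑ i ∈ Finset.univ.filter (fun i : Fin p => ¬ n ≤ i.val), t i := by
          rw [step3]
      _ ≤ ∑ i ∈ T, lam i * t i
          + ∑ i ∈ Finset.univ.filter (fun i : Fin p => ¬ n ≤ i.val), lam i * t i := by
          linarith
      _ = ∑ i, lam i * t i := final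


/-- Lemma (min_trace): for symmetric `S ∈ ℝ^{p×p}` with eigenvalues `λ 0 ≥ ⋯ ≥ λ (p−1)`
and orthonormal eigenvectors `v 0, …, v (p−1)`, and `R = diag(r₁,…,r_k)` with
`r₁ ≥ ⋯ ≥ r_k ≥ 0`, the map `H ↦ tr(S H R Hᵀ)` over semi-orthogonal `H ∈ ℝ^{p×k}` attains
its minimum at `Ĥ = [v_p, …, v_{p−k+1}]` (columns are eigenvectors for the `k` smallest
eigenvalues); in particular `tr(S H R Hᵀ) ≥ Σ_{j=1}^k r_j λ_{p−j+1}(S)` for every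
semi-orthogonal `H`. -/
theorem trace_min_stiefel (p k : ℕ) (hk : 0 < k) (hkp : k ≤ p)
    (S : Matrix (Fin p) (Fin p) ℝ) (hS : S.IsSymm)
    (lam : Fin p → ℝ) (v : Fin p → Fin p → ℝ)
    (hEig : ∀ j, S *ᵥ v j = lam j • v j)
    (hOrth : ∀ j l, v j ⬝ᵥ v l = if j = l then (1 : ℝ) else 0)
    (hAnti : ∀ j l : Fin p, j ≤ l → lam l ≤ lam j)
    (rdiag : Fin k → ℝ) (hrAnti : ∀ j l : Fin k, j ≤ l → rdiag l ≤ rdiag j)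
    (hrNN : ∀ j, 0 ≤ rdiag j) :
    (Matrix.of fun i (j : Fin k) => v (Fin.rev (Fin.castLE hkp j)) i)ᵀ *
        (Matrix.of fun i (j : Fin k) => v (Fin.rev (Fin.castLE hkp j)) i) = 1 ∧
    ∀ H : Matrix (Fin p) (Fin k) ℝ, Hᵀ * H = 1 →
      (S * (Matrix.of fun i (j : Fin k) => v (Fin.rev (Fin.castLE hkp j)) i) *
          Matrix.diagonal rdiag *
          (Matrix.of fun i (j : Fin k) => v (Fin.rev (Fin.castLE hkp j)) i)ᵀ).trace ≤
        (S * H * Matrix.diagonal rdiag * Hᵀ).trace ∧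
      (∑ j : Fin k, rdiag j * lam (Fin.rev (Fin.castLE hkp j))) ≤
        (S * H * Matrix.diagonal rdiag * Hᵀ).trace := by
  classical
  set Hhat : Matrix (Fin p) (Fin k) ℝ :=
    Matrix.of fun i (j : Fin k) => v (Fin.rev (Fin.castLE hkp j)) i with hHhatdef
  have hrevinj : Function.Injective (fun j : Fin k => Fin.rev (Fin.castLE hkp j)) := by
    intro a b hab
    have := congrArg Fin.val hab
    simp only [Fin.val_rev, Fin.coe_castLE] at this
    have ha := a.isLt
    have hb := b.isLt
    apply Fin.ext
    omega
  -- trace formula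
  have trace_eq : ∀ H : Matrix (Fin p) (Fin k) ℝ,
      (S * H * Matrix.diagonal rdiag * Hᵀ).trace
        = ∑ j : Fin k, rdiag j * ((fun i => H i j) ⬝ᵥ (S *ᵥ fun i => H i j)) := by
    intro H
    calc (S * H * Matrix.diagonal rdiag * Hᵀ).trace
        = ∑ i, ∑ j, ((S * H) i j * rdiag j) * H i j := by
          rw [Matrix.trace]
          apply Finset.sum_congr rfl; intro i _
          rw [Matrix.diag_apply, Matrix.mul_apply]
          apply Finset.sum_congr rfl; intro j _
          rw [Matrix.mul_diagonal, Matrix.transpose_apply]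
      _ = ∑ j, ∑ i, ((S * H) i j * rdiag j) * H i j := Finset.sum_comm
      _ = ∑ j : Fin k, rdiag j * ((fun i => H i j) ⬝ᵥ (S *ᵥ fun i => H i j)) := by
          apply Finset.sum_congr rfl; intro j _
          rw [dotProduct, Finset.mul_sum]
          apply Finset.sum_congr rfl; intro i _
          simp only [Matrix.mul_apply, Matrix.mulVec, dotProduct, Finset.sum_mul,
            Finset.mul_sum]
          apply Finset.sum_congr rfl; intro a _
          ring
  -- semi-orthogonality of Hhat
  have hHhatOrth : Hhatᵀ * Hhat = 1 := by
    ext j l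
    have hd : (Hhatᵀ * Hhat) j l
        = v (Fin.rev (Fin.castLE hkp j)) ⬝ᵥ v (Fin.rev (Fin.castLE hkp l)) := by
      rw [Matrix.mul_apply]; rfl
    rw [hd, hOrth]
    by_cases hjl : j = l
    · subst hjl; simp
    · have hne : Fin.rev (Fin.castLE hkp j) ≠ Fin.rev (Fin.castLE hkp l) :=
        fun hc => hjl (hrevinj hc)
      simp [hjl, hne, Matrix.one_apply]
  -- value at Hhat
  have qhat : ∀ j : Fin k,
      ((fun i => Hhat i j) ⬝ᵥ (S *ᵥ fun i => Hhat i j)) = lam (Fin.rev (Fin.castLE hkp j)) := by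
    intro j
    have hcol : (fun i => Hhat i j) = v (Fin.rev (Fin.castLE hkp j)) := rfl
    rw [hcol, hEig, dotProduct_smul, smul_eq_mul, hOrth]
    simp
  have traceHhat : (S * Hhat * Matrix.diagonal rdiag * Hhatᵀ).trace
      = ∑ j : Fin k, rdiag j * lam (Fin.rev (Fin.castLE hkp j)) := by
    rw [trace_eq Hhat]
    apply Finset.sum_congr rfl; intro j _
    rw [qhat j]
  refine ⟨hHhatOrth, ?_⟩
  intro H hH
  -- column orthonormality of H
  have colOrth : ∀ j l : Fin k,
      (fun i => H i j) ⬝ᵥ (fun i => H i l) = if j = l then (1:ℝ) else 0 := by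
    intro j l
    have := congrFun (congrFun hH j) l
    rw [Matrix.mul_apply] at this
    rw [show ((fun i => H i j) ⬝ᵥ fun i => H i l) = ∑ i, Hᵀ j i * H i l from rfl, this,
      Matrix.one_apply]
  -- set up the Abel summation
  set a' : ℕ → ℝ := fun j =>
    if hj : j < k then ((fun i => H i ⟨j, hj⟩) ⬝ᵥ (S *ᵥ fun i => H i ⟨j, hj⟩)) else 0 with ha'
  set b' : ℕ → ℝ := fun j =>
    if hj : j < p then lam ⟨p - 1 - j, by omega⟩ else 0 with hb'
  set r' : ℕ → ℝ := fun j => if hj : j < k then rdiag ⟨j, hj⟩ else 0 with hr'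
  have hpref : ∀ m, m ≤ k → ∑ j ∈ Finset.range m, b' j ≤ ∑ j ∈ Finset.range m, a' j := by
    intro m hm
    have hmp : m ≤ p := le_trans hm hkp
    set h : Fin m → Fin p → ℝ := fun j i => H i (Fin.castLE hm j) with hhdef
    have hho : ∀ j l, h j ⬝ᵥ h l = if j = l then (1:ℝ) else 0 := by
      intro j l
      have := colOrth (Fin.castLE hm j) (Fin.castLE hm l)
      rw [hhdef]
      rw [show ((fun i => H i (Fin.castLE hm j)) ⬝ᵥ fun i => H i (Fin.castLE hm l))
        = if Fin.castLE hm j = Fin.castLE hm l then (1:ℝ) else 0 from this]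
      by_cases hjl : j = l
      · subst hjl; simp
      · have : Fin.castLE hm j ≠ Fin.castLE hm l := by
          intro hc; exact hjl (Fin.castLE_injective hm hc)
        simp [hjl, this]
    have hky := kyfan p m hmp S hS lam v hEig hOrth hAnti h hho
    have e1 : ∑ j ∈ Finset.range m, b' j
        = ∑ j : Fin m, lam ⟨p - 1 - j.val, by have := j.isLt; omega⟩ := by
      rw [← Fin.sum_univ_eq_sum_range]
      apply Finset.sum_congr rfl; intro j _
      have hj := j.isLt
      simp only [hb']
      rw [dif_pos (by omega : (j : ℕ) < p)]
    have e2 : ∑ j ∈ Finset.range m, a' j = ∑ j : Fin m, h j ⬝ᵥ (S *ᵥ h j) := by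
      rw [← Fin.sum_univ_eq_sum_range]
      apply Finset.sum_congr rfl; intro j _
      have hj := j.isLt
      simp only [ha']
      rw [dif_pos (by omega : (j : ℕ) < k)]
      rfl
    rw [e1, e2]; exact hky
  have habel := abel_ineq k r' a' b'
    (by
      intro i j hij hjk
      simp only [hr']
      rw [dif_pos hjk, dif_pos (by omega : i < k)]
      exact hrAnti ⟨i, by omega⟩ ⟨j, hjk⟩ hij)
    (by intro j hjk; simp only [hr']; rw [dif_pos hjk]; exact hrNN _)
    hpref
  have eL : ∑ j ∈ Finset.range k, r' j * b' j
      = ∑ j : Fin k, rdiag j * lam (Fin.rev (Fin.castLE hkp j)) := by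
    rw [← Fin.sum_univ_eq_sum_range]
    apply Finset.sum_congr rfl; intro j _
    have hj := j.isLt
    simp only [hr', hb']
    rw [dif_pos (by omega : (j : ℕ) < k), dif_pos (by omega : (j : ℕ) < p)]
    congr 2
    apply Fin.ext
    simp only [Fin.val_rev, Fin.coe_castLE]
    omega
  have eR : ∑ j ∈ Finset.range k, r' j * a' j
      = (S * H * Matrix.diagonal rdiag * Hᵀ).trace := by
    rw [trace_eq H, ← Fin.sum_univ_eq_sum_range]
    apply Finset.sum_congr rfl; intro j _
    have hj := j.isLt
    simp only [hr', ha']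
    rw [dif_pos (by omega : (j : ℕ) < k), dif_pos (by omega : (j : ℕ) < k)]
  rw [eL, eR] at habel
  refine ⟨?_, habel⟩
  rw [traceHhat]
  exact habel

end
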